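/- Define ζ_CB(−n; z) := Σ_{m=1}^∞ (2z)^{2m} m^n / binom(2m,m) for integer n ≥ 0 and |z| < 1. Then ζ_CB(0; z) = z(z√(1−z²) + arcsin z)/(1−z²)^{3/2} (the case n = 0 of Lehmer's formula, using p_0 = q_0 = 1). -/

import Mathlib

open Real

/-- The coefficients `4^m / ((2m+1) * C(2m,m))` of the series for `arcsin y / sqrt (1-y^2)`. -/
noncomputable def aCB (m : ℕ) : ℝ :=
  4 ^ m / ((2 * (m : ℝ) + 1) * (Nat.choose (2 * m) m : ℝ))

noncomputable def hCB (y : ℝ) : ℝ := ∑' m : ℕ, aCB m * y ^ (2 * m + 1)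

noncomputable def DCB (y : ℝ) : ℝ := ∑' m : ℕ, (2 * (m : ℝ) + 1) * aCB m * y ^ (2 * m)

lemma cb_pos (m : ℕ) : (0 : ℝ) < (Nat.choose (2 * m) m : ℝ) := by
  exact_mod_cast Nat.choose_pos (by omega)

lemma aCB_pos (m : ℕ) : 0 < aCB m := by
  have h0 := cb_pos m
  have h1 : (0:ℝ) < 2 * (m:ℝ) + 1 := by positivity
  exact div_pos (by positivity) (by positivity)

lemma four_pow_le (m : ℕ) : (4 : ℝ) ^ m ≤ (2 * (m : ℝ) + 1) * (Nat.choose (2 * m) m : ℝ) := by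
  have h : (4 : ℕ) ^ m ≤ (2 * m + 1) * Nat.choose (2 * m) m := by
    rcases Nat.eq_zero_or_pos m with rfl | hm
    · simp
    · calc (4:ℕ) ^ m ≤ 2 * m * Nat.centralBinom m :=
            Nat.four_pow_le_two_mul_self_mul_centralBinom m hm
        _ ≤ (2 * m + 1) * Nat.centralBinom m := Nat.mul_le_mul_right _ (by omega)
        _ = (2 * m + 1) * Nat.choose (2 * m) m := rfl
  calc (4:ℝ) ^ m = ((4 ^ m : ℕ) : ℝ) := by push_cast; ring
    _ ≤ (((2 * m + 1) * Nat.choose (2 * m) m : ℕ) : ℝ) := by exact_mod_cast h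
    _ = (2 * (m : ℝ) + 1) * (Nat.choose (2 * m) m : ℝ) := by push_cast; ring

lemma aCB_le_one (m : ℕ) : aCB m ≤ 1 := by
  have h0 := cb_pos m
  have h1 : (0:ℝ) < 2 * (m:ℝ) + 1 := by positivity
  rw [aCB, div_le_one (by positivity)]
  exact four_pow_le m

lemma coeff_le (m : ℕ) : (2 * (m : ℝ) + 1) * aCB m ≤ 2 * (m : ℝ) + 1 := by
  have h1 : (0:ℝ) < 2 * (m:ℝ) + 1 := by positivity
  nlinarith [aCB_le_one m, aCB_pos m]

/-- The key recurrence. -/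
lemma aCB_rec (m : ℕ) : (2 * (m : ℝ) + 3) * aCB (m + 1) = (2 * (m : ℝ) + 2) * aCB m := by
  have hrec : ((m : ℝ) + 1) * (Nat.choose (2 * (m + 1)) (m + 1) : ℝ)
      = 2 * (2 * (m : ℝ) + 1) * (Nat.choose (2 * m) m : ℝ) := by
    have h2 : ((m + 1) * Nat.centralBinom (m + 1) : ℕ)
        = (2 * (2 * m + 1) * Nat.centralBinom m : ℕ) := Nat.succ_mul_centralBinom_succ m
    have h3 : (((m + 1) * Nat.centralBinom (m + 1) : ℕ) : ℝ)
        = ((2 * (2 * m + 1) * Nat.centralBinom m : ℕ) : ℝ) := by exact_mod_cast h2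
    have e1 : Nat.centralBinom (m + 1) = Nat.choose (2 * (m + 1)) (m + 1) := rfl
    have e2 : Nat.centralBinom m = Nat.choose (2 * m) m := rfl
    rw [e1, e2] at h3
    push_cast at h3
    linarith
  have c1 := cb_pos m
  have c2 := cb_pos (m + 1)
  have n1 : (2 * (m:ℝ) + 1) ≠ 0 := by positivity
  have n3 : (2 * ((m:ℝ) + 1) + 1) ≠ 0 := by positivity
  rw [aCB, aCB]
  push_cast
  field_simp
  linear_combination ((-2)*(2*(m:ℝ)+3)*4^m) * hrec

lemma summable_coeff_geom {q : ℝ} (hq : |q| < 1) :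
    Summable (fun m : ℕ => (2 * (m : ℝ) + 1) * q ^ m) := by
  have h1 : Summable (fun m : ℕ => (m : ℝ) ^ 1 * q ^ m) :=
    summable_pow_mul_geometric_of_norm_lt_one 1 (by simpa using hq)
  have h2 : Summable (fun m : ℕ => q ^ m) := summable_geometric_of_norm_lt_one (by simpa using hq)
  have h3 := (h1.mul_left 2).add h2
  refine h3.congr fun m => ?_
  simp only [pow_one]
  ring

lemma sq_abs_lt {y : ℝ} (hy : |y| < 1) : |y ^ 2| < 1 := by
  rw [abs_of_nonneg (sq_nonneg y)]
  nlinarith [abs_nonneg y, sq_abs y]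

lemma summable_D {y : ℝ} (hy : |y| < 1) :
    Summable (fun m : ℕ => (2 * (m : ℝ) + 1) * aCB m * y ^ (2 * m)) := by
  refine Summable.of_nonneg_of_le (fun m => ?_) (fun m => ?_)
      (summable_coeff_geom (sq_abs_lt hy))
  · have h1 := aCB_pos m
    have h2 : (0:ℝ) ≤ y ^ (2 * m) := by rw [pow_mul]; positivity
    positivity
  · have hy2 : y ^ (2 * m) = (y ^ 2) ^ m := by rw [← pow_mul]
    rw [hy2]
    have h1 : (0:ℝ) ≤ (y^2)^m := by positivity
    nlinarith [coeff_le m, aCB_pos m]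

lemma summable_h {y : ℝ} (hy : |y| < 1) :
    Summable (fun m : ℕ => aCB m * y ^ (2 * m + 1)) := by
  have hg : Summable (fun m : ℕ => |y| * (y ^ 2) ^ m) :=
    (summable_geometric_of_norm_lt_one (x := y ^ 2) (by simpa using sq_abs_lt hy)).mul_left _
  refine Summable.of_norm_bounded hg fun m => ?_
  have h1 : ‖aCB m * y ^ (2 * m + 1)‖ = aCB m * |y| ^ (2 * m + 1) := by
    rw [norm_mul, Real.norm_eq_abs, Real.norm_eq_abs, abs_of_pos (aCB_pos m), abs_pow]
  rw [h1]
  have h2 : |y| ^ (2 * m + 1) = |y| * (y ^ 2) ^ m := by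
    rw [pow_add, pow_mul, sq_abs, pow_one]; ring
  rw [h2]
  have h3 : (0:ℝ) ≤ |y| * (y^2)^m := by positivity
  nlinarith [aCB_le_one m, aCB_pos m]

lemma hasDerivAt_hCB {y : ℝ} (hy : |y| < 1) : HasDerivAt hCB (DCB y) y := by
  set r : ℝ := (1 + |y|) / 2 with hrdef
  have hy0 : 0 ≤ |y| := abs_nonneg y
  have hr0 : 0 < r := by rw [hrdef]; linarith
  have hyr : |y| < r := by rw [hrdef]; linarith
  have hr1 : r < 1 := by rw [hrdef]; linarith
  have hq : |r ^ 2| < 1 := by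
    rw [abs_of_nonneg (sq_nonneg r)]; nlinarith
  have hu : Summable (fun m : ℕ => (2 * (m : ℝ) + 1) * (r ^ 2) ^ m) := summable_coeff_geom hq
  exact hasDerivAt_tsum_of_isPreconnected hu Metric.isOpen_ball
    (convex_ball (0:ℝ) r).isPreconnected
    (g := fun m x => aCB m * x ^ (2 * m + 1))
    (g' := fun m x => (2 * (m : ℝ) + 1) * aCB m * x ^ (2 * m))
    (fun m x _ => by
      have h := (hasDerivAt_pow (2 * m + 1) x).const_mul (aCB m)
      refine h.congr_deriv ?_
      push_cast
      ring_nf)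
    (fun m x hx => by
      have hxr : |x| < r := by simpa [Real.dist_eq] using hx
      have h1 : ‖(2 * (m : ℝ) + 1) * aCB m * x ^ (2 * m)‖
          = (2 * (m : ℝ) + 1) * aCB m * |x| ^ (2 * m) := by
        rw [norm_mul, norm_mul, Real.norm_eq_abs, Real.norm_eq_abs, Real.norm_eq_abs,
          abs_of_pos (aCB_pos m), abs_pow,
          abs_of_nonneg (by positivity : (0:ℝ) ≤ 2 * (m:ℝ) + 1)]
      rw [h1]
      have h2 : |x| ^ (2 * m) ≤ r ^ (2 * m) :=
        pow_le_pow_left₀ (abs_nonneg x) hxr.le _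
      have h3 : r ^ (2 * m) = (r ^ 2) ^ m := by rw [← pow_mul]
      have hap := aCB_pos m
      have hnn : (0:ℝ) ≤ (2 * (m : ℝ) + 1) * aCB m := by positivity
      calc (2 * (m : ℝ) + 1) * aCB m * |x| ^ (2 * m)
          ≤ (2 * (m : ℝ) + 1) * aCB m * (r ^ 2) ^ m := by
            rw [← h3]; exact mul_le_mul_of_nonneg_left h2 hnn
        _ ≤ (2 * (m : ℝ) + 1) * (r ^ 2) ^ m := by
            have h4 : (0:ℝ) ≤ (r^2)^m := by positivity
            nlinarith [coeff_le m])
    (Metric.mem_ball_self hr0)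
    (by
      have h5 : (fun m : ℕ => aCB m * (0:ℝ) ^ (2 * m + 1)) = fun _ => (0:ℝ) := by
        funext m; simp
      rw [h5]; exact summable_zero)
    (by simpa [Real.dist_eq] using hyr)

lemma ode_CB {y : ℝ} (hy : |y| < 1) : (1 - y ^ 2) * DCB y = 1 + y * hCB y := by
  set f : ℕ → ℝ := fun m => (2 * (m : ℝ) + 1) * aCB m * y ^ (2 * m) with hfdef
  have hD : HasSum f (DCB y) := (summable_D hy).hasSum
  have hh : HasSum (fun m : ℕ => aCB m * y ^ (2 * m + 1)) (hCB y) := (summable_h hy).hasSum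
  have hf0 : f 0 = 1 := by simp [hfdef, aCB]
  have hshift : HasSum (fun m => f (m + 1)) (DCB y - 1) := by
    rw [hasSum_nat_add_iff 1]
    simpa [hf0] using hD
  have h2 : HasSum (fun m => f (m + 1) - y ^ 2 * f m) (DCB y - 1 - y ^ 2 * DCB y) :=
    hshift.sub (hD.mul_left (y ^ 2))
  have key : (fun m : ℕ => f (m + 1) - y ^ 2 * f m)
      = fun m : ℕ => y * (aCB m * y ^ (2 * m + 1)) := by
    funext m
    have hrec := aCB_rec m
    have hfm1 : f (m + 1) = (2 * (m : ℝ) + 2) * aCB m * y ^ (2 * m + 2) := by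
      show (2 * ((m + 1 : ℕ) : ℝ) + 1) * aCB (m + 1) * y ^ (2 * (m + 1)) = _
      have e1 : (2 * ((m + 1 : ℕ) : ℝ) + 1) = 2 * (m:ℝ) + 3 := by push_cast; ring
      have e2 : 2 * (m + 1) = 2 * m + 2 := by ring
      rw [e1, e2, hrec]
    rw [hfm1]
    show _ - y ^ 2 * ((2 * (m : ℝ) + 1) * aCB m * y ^ (2 * m)) = _
    ring
  rw [key] at h2
  have h3 : HasSum (fun m : ℕ => y * (aCB m * y ^ (2 * m + 1))) (y * hCB y) := hh.mul_left y
  have h4 := h2.unique h3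
  linear_combination h4

lemma harc_CB {y : ℝ} (hy : |y| < 1) : hCB y * Real.sqrt (1 - y ^ 2) = Real.arcsin y := by
  have hmem : y ∈ Set.Ioo (-1:ℝ) 1 := by
    obtain ⟨h1, h2⟩ := abs_lt.1 hy
    exact ⟨h1, h2⟩
  set φ : ℝ → ℝ := fun x => hCB x * Real.sqrt (1 - x ^ 2) - Real.arcsin x with hφdef
  have key : ∀ x ∈ Set.Ioo (-1:ℝ) 1, HasDerivAt φ 0 x := by
    rintro x ⟨hx1, hx2⟩
    have hxa : |x| < 1 := abs_lt.2 ⟨hx1, hx2⟩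
    have h1 : (0:ℝ) < 1 - x ^ 2 := by nlinarith
    have hs0 : 0 < Real.sqrt (1 - x ^ 2) := Real.sqrt_pos.2 h1
    have hss : Real.sqrt (1 - x ^ 2) * Real.sqrt (1 - x ^ 2) = 1 - x ^ 2 :=
      Real.mul_self_sqrt h1.le
    have dh := hasDerivAt_hCB hxa
    have dinner : HasDerivAt (fun x : ℝ => 1 - x ^ 2) (-(2 * x)) x := by
      simpa using (hasDerivAt_pow 2 x).const_sub 1
    have dsq : HasDerivAt (fun x : ℝ => Real.sqrt (1 - x ^ 2)) (-x / Real.sqrt (1 - x ^ 2)) x := by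
      have hcomp := (Real.hasDerivAt_sqrt h1.ne').comp x dinner
      refine hcomp.congr_deriv ?_
      field_simp
    have darc := Real.hasDerivAt_arcsin hx1.ne' hx2.ne
    have dφ := (dh.mul dsq).sub darc
    have hval : DCB x * Real.sqrt (1 - x ^ 2) + hCB x * (-x / Real.sqrt (1 - x ^ 2))
        - 1 / Real.sqrt (1 - x ^ 2) = 0 := by
      have hode := ode_CB hxa
      field_simp
      linear_combination DCB x * hss + hode
    rw [hval] at dφ
    exact dφ
  have hdiff : DifferentiableOn ℝ φ (Set.Ioo (-1:ℝ) 1) :=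
    fun x hx => (key x hx).differentiableAt.differentiableWithinAt
  have hfd : ∀ x ∈ Set.Ioo (-1:ℝ) 1, fderivWithin ℝ φ (Set.Ioo (-1:ℝ) 1) x = 0 := by
    intro x hx
    rw [fderivWithin_of_isOpen isOpen_Ioo hx, (key x hx).hasFDerivAt.fderiv]
    ext
    simp
  have h0 : φ y = φ 0 :=
    (convex_Ioo (-1:ℝ) 1).is_const_of_fderivWithin_eq_zero hdiff hfd hmem (by norm_num)
  have hh0 : hCB 0 = 0 := by
    rw [hCB]
    convert tsum_zero with m
    simp
  have hφ0 : φ 0 = 0 := by simp [hφdef, hh0]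
  have hy0 := h0.trans hφ0
  have : hCB y * Real.sqrt (1 - y ^ 2) - Real.arcsin y = 0 := hy0
  linarith

theorem zetaCB_zero (z : ℝ) (hz : |z| < 1) :
    ∑' m : ℕ, (2 * z) ^ (2 * (m + 1)) / (Nat.choose (2 * (m + 1)) (m + 1) : ℝ) =
      z * (z * Real.sqrt (1 - z ^ 2) + Real.arcsin z) / (1 - z ^ 2) ^ ((3 : ℝ) / 2) := by
  have h1 : (0:ℝ) < 1 - z ^ 2 := by nlinarith [sq_abs z, abs_nonneg z]
  have hs0 : 0 < Real.sqrt (1 - z ^ 2) := Real.sqrt_pos.2 h1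
  have hss : Real.sqrt (1 - z ^ 2) ^ 2 = 1 - z ^ 2 := Real.sq_sqrt h1.le
  have hD := (summable_D hz).hasSum
  have hh := (summable_h hz).hasSum
  have hsum : HasSum
      (fun m : ℕ => (2 * z) ^ (2 * (m + 1)) / (Nat.choose (2 * (m + 1)) (m + 1) : ℝ))
      (z ^ 2 * DCB z + z * hCB z) := by
    have hadd := (hD.mul_left (z ^ 2)).add (hh.mul_left z)
    have hfun : (fun m : ℕ => z ^ 2 * ((2 * (m:ℝ) + 1) * aCB m * z ^ (2 * m))
          + z * (aCB m * z ^ (2 * m + 1)))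
        = fun m : ℕ => (2 * z) ^ (2 * (m + 1)) / (Nat.choose (2 * (m + 1)) (m + 1) : ℝ) := by
      funext m
      have hrec := aCB_rec m
      have hc2 := cb_pos (m + 1)
      have hpow : (2 * z) ^ (2 * (m + 1)) = 4 ^ (m + 1) * z ^ (2 * (m + 1)) := by
        rw [mul_pow]
        congr 1
        rw [pow_mul]
        norm_num
      have hkey : (4:ℝ) ^ (m + 1) / (Nat.choose (2 * (m + 1)) (m + 1) : ℝ)
          = (2 * (m:ℝ) + 2) * aCB m := by
        rw [← hrec, aCB]
        push_cast
        field_simp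
        ring
      have lhs_eq : z ^ 2 * ((2 * (m:ℝ) + 1) * aCB m * z ^ (2 * m))
          + z * (aCB m * z ^ (2 * m + 1))
          = (2 * (m:ℝ) + 2) * aCB m * z ^ (2 * (m + 1)) := by ring
      rw [lhs_eq, hpow, ← hkey]
      ring
    rw [hfun] at hadd
    exact hadd
  rw [hsum.tsum_eq]
  have hode := ode_CB hz
  have e1 := harc_CB hz
  have hrp : (1 - z ^ 2) ^ ((3:ℝ)/2) = Real.sqrt (1 - z ^ 2) ^ 3 := by
    rw [show ((3:ℝ)/2) = (1/2 : ℝ) * 3 by norm_num, Real.rpow_mul h1.le,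
      ← Real.sqrt_eq_rpow, show ((3:ℝ)) = ((3:ℕ):ℝ) by norm_num, Real.rpow_natCast]
  rw [hrp, ← e1]
  have hD' : DCB z * Real.sqrt (1 - z ^ 2) ^ 2 = 1 + z * hCB z := by
    rw [hss]; linarith
  field_simp
  linear_combination z ^ 2 * hD'
    + (z * hCB z) * hss
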